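/- Let V be a finite type and let p : V → ℝ³ be not collinear. Then: (a) the linear map Φ : (V → ℝ³) → Λ²(ℝ⁴) defined by Φ f = ∑_i (f i, 0) ∧ (p i, 1) is surjective; (b) the kernel of Φ is exactly the space of equilibrium loads on (V, p); and hence (c) the space of equilibrium loads on (V, p) is a linear subspace of V → ℝ³ of dimension 3·|V| − 6. -/

import Mathlib

open Matrix

/-- The space of equilibrium loads on a finite configuration `p : V → ℝ³`:
loads `f` with `∑ f i = 0` and `∑ (p i) ⨯₃ (f i) = 0`. -/
def eqLoads (V : Type*) [Fintype V] (p : V → Fin 3 → ℝ) :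
    Submodule ℝ (V → Fin 3 → ℝ) where
  carrier := {f | (∑ i, f i) = 0 ∧ (∑ i, (p i) ⨯₃ (f i)) = 0}
  zero_mem' := by simp
  add_mem' := by
    rintro f g ⟨hf1, hf2⟩ ⟨hg1, hg2⟩
    constructor
    · simp only [Pi.add_apply, Finset.sum_add_distrib, hf1, hg1, add_zero]
    · simp only [Pi.add_apply, map_add, Finset.sum_add_distrib, hf2, hg2, add_zero]
  smul_mem' := by
    rintro c f ⟨hf1, hf2⟩
    constructor
    · simp only [Pi.smul_apply, ← Finset.smul_sum, hf1, smul_zero]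
    · simp only [Pi.smul_apply, _root_.map_smul, ← Finset.smul_sum, hf2, smul_zero]

/-- The wedge product of two vectors of `ℝ⁴` as an element of the second exterior power
`Λ²(ℝ⁴)`. -/
noncomputable def wedge2 (x y : Fin 4 → ℝ) : ⋀[ℝ]^2 (Fin 4 → ℝ) :=
  ⟨ExteriorAlgebra.ι ℝ x * ExteriorAlgebra.ι ℝ y, by
    show _ ∈ LinearMap.range (ExteriorAlgebra.ι ℝ :
      (Fin 4 → ℝ) →ₗ[ℝ] ExteriorAlgebra ℝ (Fin 4 → ℝ)) ^ 2
    rw [pow_two]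
    exact Submodule.mul_mem_mul (LinearMap.mem_range_self _ x) (LinearMap.mem_range_self _ y)⟩

/-- The map `Φ : (V → ℝ³) → Λ²(ℝ⁴)`, `Φ f = ∑ i, (f i, 0) ∧ (p i, 1)`. -/
noncomputable def Phi {V : Type*} [Fintype V] (p : V → Fin 3 → ℝ)
    (f : V → Fin 3 → ℝ) : ⋀[ℝ]^2 (Fin 4 → ℝ) :=
  ∑ i, wedge2 (Fin.snoc (f i) 0) (Fin.snoc (p i) 1)

namespace PhiAux

open ExteriorAlgebra

lemma wedge2_coe (x y : Fin 4 → ℝ) :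
    (wedge2 x y : ExteriorAlgebra ℝ (Fin 4 → ℝ)) = ι ℝ x * ι ℝ y := rfl

noncomputable def wedgeL :
    (Fin 4 → ℝ) →ₗ[ℝ] (Fin 4 → ℝ) →ₗ[ℝ] (⋀[ℝ]^2 (Fin 4 → ℝ)) :=
  LinearMap.mk₂ ℝ wedge2
    (fun x x' y => Subtype.ext (by simp [wedge2_coe, add_mul]))
    (fun c x y => Subtype.ext (by simp [wedge2_coe, smul_mul_assoc]))
    (fun x y y' => Subtype.ext (by simp [wedge2_coe, mul_add]))
    (fun c x y => Subtype.ext (by simp [wedge2_coe, mul_smul_comm]))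

lemma wedge2_eq_wedgeL (x y : Fin 4 → ℝ) : wedge2 x y = wedgeL x y := rfl

lemma wedge2_self (x : Fin 4 → ℝ) : wedge2 x x = 0 :=
  Subtype.ext (by simp [wedge2_coe, ι_sq_zero])

lemma wedge2_anticomm (x y : Fin 4 → ℝ) : wedge2 y x = - wedge2 x y := by
  apply Subtype.ext
  show ι ℝ y * ι ℝ x = -(ι ℝ x * ι ℝ y)
  exact eq_neg_of_add_eq_zero_left (ι_add_mul_swap y x)

def e (a : Fin 4) : Fin 4 → ℝ := Pi.single a 1

noncomputable def w (a b : Fin 4) : ⋀[ℝ]^2 (Fin 4 → ℝ) := wedge2 (e a) (e b)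

lemma wL (a b : Fin 4) : wedgeL (e a) (e b) = w a b := rfl

lemma w_self (a : Fin 4) : w a a = 0 := wedge2_self _

lemma pi_sum (x : Fin 4 → ℝ) : x = x 0 • e 0 + x 1 • e 1 + x 2 • e 2 + x 3 • e 3 := by
  funext j; fin_cases j <;> simp [e, Pi.single_apply]

lemma wedge2_expand (x y : Fin 4 → ℝ) :
    wedge2 x y = (x 0 * y 1 - x 1 * y 0) • w 0 1 + (x 0 * y 2 - x 2 * y 0) • w 0 2 +
      (x 0 * y 3 - x 3 * y 0) • w 0 3 + (x 1 * y 2 - x 2 * y 1) • w 1 2 +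
      (x 1 * y 3 - x 3 * y 1) • w 1 3 + (x 2 * y 3 - x 3 * y 2) • w 2 3 := by
  have h10 : w 1 0 = - w 0 1 := wedge2_anticomm _ _
  have h20 : w 2 0 = - w 0 2 := wedge2_anticomm _ _
  have h30 : w 3 0 = - w 0 3 := wedge2_anticomm _ _
  have h21 : w 2 1 = - w 1 2 := wedge2_anticomm _ _
  have h31 : w 3 1 = - w 1 3 := wedge2_anticomm _ _
  have h32 : w 3 2 = - w 2 3 := wedge2_anticomm _ _
  conv_lhs => rw [wedge2_eq_wedgeL, pi_sum x, pi_sum y]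
  simp only [map_add, _root_.map_smul, LinearMap.add_apply, LinearMap.smul_apply, wL,
    w_self, h10, h20, h30, h21, h31, h32, smul_smul, smul_zero, smul_neg]

  module

noncomputable def sel (a b : Fin 4) : (Fin 4 → ℝ) →ₗ[ℝ] (Fin 2 → ℝ) :=
  LinearMap.pi fun t => LinearMap.proj (![a, b] t)

noncomputable def phiAB (a b : Fin 4) : (Fin 4 → ℝ) [⋀^Fin 2]→ₗ[ℝ] ℝ :=
  (Matrix.detRowAlternating : (Fin 2 → ℝ) [⋀^Fin 2]→ₗ[ℝ] ℝ).compLinearMap (sel a b)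

noncomputable def Fam (a b : Fin 4) : (i : ℕ) → (Fin 4 → ℝ) [⋀^Fin i]→ₗ[ℝ] ℝ
  | 2 => phiAB a b
  | _ => 0

noncomputable def gfun (a b : Fin 4) : (⋀[ℝ]^2 (Fin 4 → ℝ)) →ₗ[ℝ] ℝ :=
  (liftAlternating (Fam a b)).comp (Submodule.subtype _)

lemma ιMulti_two (x y : Fin 4 → ℝ) :
    (ιMulti ℝ 2 ![x, y] : ExteriorAlgebra ℝ (Fin 4 → ℝ)) = ι ℝ x * ι ℝ y := by
  rw [ιMulti_apply]
  simp [List.ofFn_succ]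

lemma gfun_wedge2 (a b : Fin 4) (x y : Fin 4 → ℝ) :
    gfun a b (wedge2 x y) = x a * y b - x b * y a := by
  have h1 : gfun a b (wedge2 x y)
      = liftAlternating (Fam a b) (ι ℝ x * ι ℝ y) := rfl
  rw [h1, ← ιMulti_two, liftAlternating_apply_ιMulti]
  have h2 : Fam a b 2 = phiAB a b := rfl
  rw [h2]
  have h3 : (phiAB a b) ![x, y] = Matrix.det (Matrix.of fun i => sel a b (![x, y] i)) := rfl
  rw [h3, Matrix.det_fin_two]
  simp [sel]

lemma gfun_w (a b c d : Fin 4) :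
    gfun a b (w c d) = e c a * e d b - e c b * e d a := gfun_wedge2 a b (e c) (e d)

lemma snoc_zero : (Fin.snoc (0 : Fin 3 → ℝ) (0:ℝ) : Fin 4 → ℝ) = 0 := by
  funext j
  induction j using Fin.lastCases <;> simp [-Fin.reduceLast]

lemma snoc_add (u v : Fin 3 → ℝ) :
    (Fin.snoc (u + v) (0:ℝ) : Fin 4 → ℝ) = Fin.snoc u 0 + Fin.snoc v 0 := by
  funext j
  induction j using Fin.lastCases <;> simp [-Fin.reduceLast]

lemma snoc_smul (c : ℝ) (u : Fin 3 → ℝ) :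
    (Fin.snoc (c • u : Fin 3 → ℝ) (0:ℝ) : Fin 4 → ℝ) = c • (Fin.snoc u 0 : Fin 4 → ℝ) := by
  funext j
  induction j using Fin.lastCases <;> simp [-Fin.reduceLast]

lemma snoc_sub (u v : Fin 3 → ℝ) :
    (Fin.snoc (u - v) (0:ℝ) : Fin 4 → ℝ) = Fin.snoc u 1 - Fin.snoc v 1 := by
  funext j
  induction j using Fin.lastCases <;> simp [-Fin.reduceLast]

lemma snoc_one_split (u : Fin 3 → ℝ) :
    (Fin.snoc u (1:ℝ) : Fin 4 → ℝ) = Fin.snoc u 0 + Fin.snoc (0 : Fin 3 → ℝ) 1 := by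
  funext j
  induction j using Fin.lastCases <;> simp [-Fin.reduceLast]

lemma snoc_val0 (u : Fin 3 → ℝ) (c : ℝ) : (Fin.snoc u c : Fin 4 → ℝ) 0 = u 0 := by
  have : (0 : Fin 4) = Fin.castSucc 0 := rfl
  rw [this, Fin.snoc_castSucc]
lemma snoc_val1 (u : Fin 3 → ℝ) (c : ℝ) : (Fin.snoc u c : Fin 4 → ℝ) 1 = u 1 := by
  have : (1 : Fin 4) = Fin.castSucc 1 := rfl
  rw [this, Fin.snoc_castSucc]
lemma snoc_val2 (u : Fin 3 → ℝ) (c : ℝ) : (Fin.snoc u c : Fin 4 → ℝ) 2 = u 2 := by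
  have : (2 : Fin 4) = Fin.castSucc 2 := rfl
  rw [this, Fin.snoc_castSucc]
lemma snoc_val3 (u : Fin 3 → ℝ) (c : ℝ) : (Fin.snoc u c : Fin 4 → ℝ) 3 = c := by
  have : (3 : Fin 4) = Fin.last 3 := rfl
  rw [this, Fin.snoc_last]

variable {V : Type*} [Fintype V]

noncomputable def PhiL (p : V → Fin 3 → ℝ) :
    (V → Fin 3 → ℝ) →ₗ[ℝ] (⋀[ℝ]^2 (Fin 4 → ℝ)) where
  toFun := Phi p
  map_add' f g := by
    unfold Phi
    simp only [Pi.add_apply, snoc_add, wedge2_eq_wedgeL, map_add, LinearMap.add_apply,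
      Finset.sum_add_distrib]
  map_smul' c f := by
    unfold Phi
    simp only [Pi.smul_apply, snoc_smul, wedge2_eq_wedgeL, _root_.map_smul,
      LinearMap.smul_apply, Finset.smul_sum, RingHom.id_apply]

lemma Phi_eq (p f : V → Fin 3 → ℝ) :
    Phi p f = (∑ i, (f i 0 * p i 1 - f i 1 * p i 0)) • w 0 1
      + (∑ i, (f i 0 * p i 2 - f i 2 * p i 0)) • w 0 2
      + (∑ i, f i 0) • w 0 3
      + (∑ i, (f i 1 * p i 2 - f i 2 * p i 1)) • w 1 2
      + (∑ i, f i 1) • w 1 3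
      + (∑ i, f i 2) • w 2 3 := by
  unfold Phi
  have key : ∀ i : V, wedge2 (Fin.snoc (f i) 0) (Fin.snoc (p i) 1)
      = (f i 0 * p i 1 - f i 1 * p i 0) • w 0 1
      + (f i 0 * p i 2 - f i 2 * p i 0) • w 0 2
      + (f i 0) • w 0 3
      + (f i 1 * p i 2 - f i 2 * p i 1) • w 1 2
      + (f i 1) • w 1 3
      + (f i 2) • w 2 3 := by
    intro i
    rw [wedge2_expand]
    simp only [snoc_val0, snoc_val1, snoc_val2, snoc_val3]
    module

  rw [Finset.sum_congr rfl fun i _ => key i]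
  simp only [Finset.sum_add_distrib, ← Finset.sum_smul]

lemma cross0 (p f : V → Fin 3 → ℝ) :
    (∑ i, p i ⨯₃ f i) 0 = -(∑ i, (f i 1 * p i 2 - f i 2 * p i 1)) := by
  rw [Finset.sum_apply, ← Finset.sum_neg_distrib]
  exact Finset.sum_congr rfl fun i _ => by simp [cross_apply]; ring

lemma cross1 (p f : V → Fin 3 → ℝ) :
    (∑ i, p i ⨯₃ f i) 1 = (∑ i, (f i 0 * p i 2 - f i 2 * p i 0)) := by
  rw [Finset.sum_apply]
  exact Finset.sum_congr rfl fun i _ => by simp [cross_apply]; ring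

lemma cross2 (p f : V → Fin 3 → ℝ) :
    (∑ i, p i ⨯₃ f i) 2 = -(∑ i, (f i 0 * p i 1 - f i 1 * p i 0)) := by
  rw [Finset.sum_apply, ← Finset.sum_neg_distrib]
  exact Finset.sum_congr rfl fun i _ => by simp [cross_apply]; ring

lemma ker_iff (p f : V → Fin 3 → ℝ) :
    Phi p f = 0 ↔ ((∑ i, f i) = 0 ∧ (∑ i, p i ⨯₃ f i) = 0) := by
  constructor
  · intro h
    rw [Phi_eq] at h
    have g01 := congrArg (gfun 0 1) h
    have g02 := congrArg (gfun 0 2) h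
    have g03 := congrArg (gfun 0 3) h
    have g12 := congrArg (gfun 1 2) h
    have g13 := congrArg (gfun 1 3) h
    have g23 := congrArg (gfun 2 3) h
    simp only [map_add, _root_.map_smul, gfun_w, map_zero, e,
      Pi.single_apply] at g01 g02 g03 g12 g13 g23
    simp (config := { decide := true }) only [] at g01 g02 g03 g12 g13 g23
    norm_num at g01 g02 g03 g12 g13 g23
    constructor
    · funext j
      fin_cases j <;> simp only [Finset.sum_apply, Pi.zero_apply] <;> assumption
    · funext j
      fin_cases j
      · show (∑ i, p i ⨯₃ f i) 0 = 0
        rw [cross0 p f]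
        simp only [Finset.sum_sub_distrib]
        rw [g12, neg_zero]
      · show (∑ i, p i ⨯₃ f i) 1 = 0
        rw [cross1 p f]
        simp only [Finset.sum_sub_distrib]
        exact g02
      · show (∑ i, p i ⨯₃ f i) 2 = 0
        rw [cross2 p f]
        simp only [Finset.sum_sub_distrib]
        rw [g01, neg_zero]
  · rintro ⟨h1, h2⟩
    rw [Phi_eq]
    have c0 : (∑ i, (f i 1 * p i 2 - f i 2 * p i 1)) = 0 := by
      have hh := congrFun h2 0
      rw [cross0 p f] at hh
      simp only [Pi.zero_apply, neg_eq_zero] at hh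
      exact hh
    have c1 : (∑ i, (f i 0 * p i 2 - f i 2 * p i 0)) = 0 := by
      have := congrFun h2 1
      rwa [cross1 p f] at this
    have c2 : (∑ i, (f i 0 * p i 1 - f i 1 * p i 0)) = 0 := by
      have hh := congrFun h2 2
      rw [cross2 p f] at hh
      simp only [Pi.zero_apply, neg_eq_zero] at hh
      exact hh
    have s0 : (∑ i, f i 0) = 0 := by
      have := congrFun h1 0; rwa [Finset.sum_apply] at this
    have s1 : (∑ i, f i 1) = 0 := by
      have := congrFun h1 1; rwa [Finset.sum_apply] at this
    have s2 : (∑ i, f i 2) = 0 := by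
      have := congrFun h1 2; rwa [Finset.sum_apply] at this
    rw [c0, c1, c2, s0, s1, s2]
    simp

lemma lam2_le (Q : Submodule ℝ (⋀[ℝ]^2 (Fin 4 → ℝ)))
    (h : ∀ x y : Fin 4 → ℝ, wedge2 x y ∈ Q) (z : ⋀[ℝ]^2 (Fin 4 → ℝ)) : z ∈ Q := by
  have h2 : (z : ExteriorAlgebra ℝ (Fin 4 → ℝ)) ∈ LinearMap.range (ι ℝ :
      (Fin 4 → ℝ) →ₗ[ℝ] ExteriorAlgebra ℝ (Fin 4 → ℝ)) ^ 2 := z.2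
  rw [pow_two] at h2
  have hmem : (z : ExteriorAlgebra ℝ (Fin 4 → ℝ)) ∈ Q.map (Submodule.subtype _) := by
    refine Submodule.mul_induction_on h2 ?_ ?_
    · rintro m ⟨x, rfl⟩ n ⟨y, rfl⟩
      exact ⟨wedge2 x y, h x y, rfl⟩
    · intro a b ha hb
      exact add_mem ha hb
  obtain ⟨v, hv, hvz⟩ := hmem
  exact (Subtype.ext hvz : v = z) ▸ hv

noncomputable def W6 : Fin 6 → ⋀[ℝ]^2 (Fin 4 → ℝ) :=
  ![w 0 1, w 0 2, w 0 3, w 1 2, w 1 3, w 2 3]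

lemma wedge2_mem_spanW6 (x y : Fin 4 → ℝ) :
    wedge2 x y ∈ Submodule.span ℝ (Set.range W6) := by
  have m : ∀ i : Fin 6, W6 i ∈ Submodule.span ℝ (Set.range W6) :=
    fun i => Submodule.subset_span ⟨i, rfl⟩
  rw [wedge2_expand]
  refine add_mem (add_mem (add_mem (add_mem (add_mem
    (Submodule.smul_mem _ _ (m 0)) (Submodule.smul_mem _ _ (m 1)))
    (Submodule.smul_mem _ _ (m 2))) (Submodule.smul_mem _ _ (m 3)))
    (Submodule.smul_mem _ _ (m 4))) (Submodule.smul_mem _ _ (m 5))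

lemma w_li : LinearIndependent ℝ W6 := by
  rw [Fintype.linearIndependent_iff]
  intro g hg
  have hsum : (∑ i, g i • W6 i) = g 0 • w 0 1 + g 1 • w 0 2 + g 2 • w 0 3
      + g 3 • w 1 2 + g 4 • w 1 3 + g 5 • w 2 3 := by
    have e0 : W6 0 = w 0 1 := rfl
    have e1 : W6 1 = w 0 2 := rfl
    have e2 : W6 2 = w 0 3 := rfl
    have e3 : W6 3 = w 1 2 := rfl
    have e4 : W6 4 = w 1 3 := rfl
    have e5 : W6 5 = w 2 3 := rfl
    rw [Fin.sum_univ_six, e0, e1, e2, e3, e4, e5]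
  rw [hsum] at hg
  have g01 := congrArg (gfun 0 1) hg
  have g02 := congrArg (gfun 0 2) hg
  have g03 := congrArg (gfun 0 3) hg
  have g12 := congrArg (gfun 1 2) hg
  have g13 := congrArg (gfun 1 3) hg
  have g23 := congrArg (gfun 2 3) hg
  simp only [map_add, _root_.map_smul, gfun_w, map_zero, e,
    Pi.single_apply] at g01 g02 g03 g12 g13 g23
  simp (config := { decide := true }) only [] at g01 g02 g03 g12 g13 g23
  norm_num at g01 g02 g03 g12 g13 g23
  intro i
  fin_cases i <;> assumption

noncomputable def bW : Module.Basis (Fin 6) ℝ (⋀[ℝ]^2 (Fin 4 → ℝ)) :=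
  Module.Basis.mk w_li (fun z _ => lam2_le _ wedge2_mem_spanW6 z)

lemma finrank_lam2 : Module.finrank ℝ (⋀[ℝ]^2 (Fin 4 → ℝ)) = 6 := by
  rw [Module.finrank_eq_card_basis bW, Fintype.card_fin]

lemma mem1 (p : V → Fin 3 → ℝ) (u : Fin 3 → ℝ) (t : V) :
    wedge2 (Fin.snoc u 0) (Fin.snoc (p t) 1) ∈ LinearMap.range (PhiL p) := by
  classical
  refine ⟨fun v => if v = t then u else 0, ?_⟩
  show Phi p _ = _
  unfold Phi
  rw [Finset.sum_eq_single t]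
  · simp
  · intro v _ hv
    simp only [if_neg hv]
    rw [snoc_zero, wedge2_eq_wedgeL, map_zero]
    rfl
  · intro ht
    exact absurd (Finset.mem_univ t) ht

lemma exists_repr {a b : Fin 3 → ℝ} (hab : LinearIndependent ℝ ![a, b]) (v : Fin 3 → ℝ) :
    ∃ α β γ : ℝ, v = α • a + β • b + γ • (a ⨯₃ b) := by
  set c : Fin 3 → ℝ := a ⨯₃ b with hc
  have hcne : c ≠ 0 := crossProduct_ne_zero_iff_linearIndependent.mpr hab
  have hdet : Matrix.det ![a, b, c] = c ⬝ᵥ c := by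
    rw [← triple_product_eq_det, triple_product_permutation, triple_product_permutation, ← hc]
  have hu : IsUnit (Matrix.of ![a, b, c]) := by
    rw [Matrix.isUnit_iff_isUnit_det, isUnit_iff_ne_zero]
    rw [show Matrix.det (Matrix.of ![a, b, c]) = Matrix.det ![a, b, c] from rfl, hdet]
    exact fun h => hcne (dotProduct_self_eq_zero.mp h)
  have hli : LinearIndependent ℝ ![a, b, c] :=
    Matrix.linearIndependent_rows_iff_isUnit.mpr hu
  have hcard : Fintype.card (Fin 3) = Module.finrank ℝ (Fin 3 → ℝ) := by
    simp [Module.finrank_pi]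
  let B := basisOfLinearIndependentOfCardEqFinrank hli hcard
  have hB : ⇑B = ![a, b, c] := coe_basisOfLinearIndependentOfCardEqFinrank hli hcard
  refine ⟨B.repr v 0, B.repr v 1, B.repr v 2, ?_⟩
  have hs := B.sum_repr v
  rw [Fin.sum_univ_three, hB] at hs
  have v0 : (![a, b, c] : Fin 3 → Fin 3 → ℝ) 0 = a := rfl
  have v1 : (![a, b, c] : Fin 3 → Fin 3 → ℝ) 1 = b := rfl
  have v2 : (![a, b, c] : Fin 3 → Fin 3 → ℝ) 2 = c := rfl
  rw [v0, v1, v2] at hs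
  exact hs.symm

lemma range_top (p : V → Fin 3 → ℝ)
    (hp : ∃ i j k : V, AffineIndependent ℝ ![p i, p j, p k]) :
    ∀ z : ⋀[ℝ]^2 (Fin 4 → ℝ), z ∈ LinearMap.range (PhiL p) := by
  obtain ⟨i, j, k, hijk⟩ := hp
  have h0 := (affineIndependent_iff_linearIndependent_vsub ℝ ![p i, p j, p k] 0).mp hijk
  have hinj : Function.Injective
      (fun t : Fin 2 => (⟨Fin.succ t, Fin.succ_ne_zero t⟩ : {x : Fin 3 // x ≠ 0})) := by
    intro s t hst
    exact Fin.succ_injective _ (congrArg Subtype.val hst)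
  have h1 := h0.comp _ hinj
  have hab : LinearIndependent ℝ ![p j - p i, p k - p i] := by
    have hfun : ![p j - p i, p k - p i] =
        (fun x : {x : Fin 3 // x ≠ 0} => ![p i, p j, p k] x -ᵥ ![p i, p j, p k] 0) ∘
          (fun t : Fin 2 => (⟨Fin.succ t, Fin.succ_ne_zero t⟩ : {x : Fin 3 // x ≠ 0})) := by
      funext t
      fin_cases t <;> simp [vsub_eq_sub]
    rw [hfun]
    exact h1
  set a : Fin 3 → ℝ := p j - p i with ha
  set b : Fin 3 → ℝ := p k - p i with hb
  set c : Fin 3 → ℝ := a ⨯₃ b with hc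
  set RS := LinearMap.range (PhiL p) with hRS
  have memD_a : ∀ u : Fin 3 → ℝ, wedge2 (Fin.snoc u 0) (Fin.snoc a 0) ∈ RS := by
    intro u
    have hsub : wedge2 (Fin.snoc u 0) (Fin.snoc a (0:ℝ))
        = wedge2 (Fin.snoc u 0) (Fin.snoc (p j) 1)
          - wedge2 (Fin.snoc u 0) (Fin.snoc (p i) 1) := by
      rw [ha, snoc_sub, wedge2_eq_wedgeL, wedge2_eq_wedgeL, wedge2_eq_wedgeL, map_sub]
    rw [hsub]
    exact sub_mem (mem1 p u j) (mem1 p u i)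
  have memD_b : ∀ u : Fin 3 → ℝ, wedge2 (Fin.snoc u 0) (Fin.snoc b 0) ∈ RS := by
    intro u
    have hsub : wedge2 (Fin.snoc u 0) (Fin.snoc b (0:ℝ))
        = wedge2 (Fin.snoc u 0) (Fin.snoc (p k) 1)
          - wedge2 (Fin.snoc u 0) (Fin.snoc (p i) 1) := by
      rw [hb, snoc_sub, wedge2_eq_wedgeL, wedge2_eq_wedgeL, wedge2_eq_wedgeL, map_sub]
    rw [hsub]
    exact sub_mem (mem1 p u k) (mem1 p u i)
  have snoc_comb : ∀ (α β γ : ℝ) (x y z' : Fin 3 → ℝ),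
      (Fin.snoc (α • x + β • y + γ • z' : Fin 3 → ℝ) (0:ℝ) : Fin 4 → ℝ)
        = α • (Fin.snoc x 0 : Fin 4 → ℝ) + β • (Fin.snoc y 0 : Fin 4 → ℝ)
          + γ • (Fin.snoc z' 0 : Fin 4 → ℝ) := by
    intro α β γ x y z'
    rw [snoc_add, snoc_add, snoc_smul, snoc_smul, snoc_smul]
  have memD_c : ∀ u : Fin 3 → ℝ, wedge2 (Fin.snoc u 0) (Fin.snoc c 0) ∈ RS := by
    intro u
    obtain ⟨α, β, γ, hu⟩ := exists_repr hab u
    rw [← hc] at hu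
    have expand : wedge2 (Fin.snoc u 0) (Fin.snoc c 0)
        = α • wedge2 (Fin.snoc a 0) (Fin.snoc c 0)
          + β • wedge2 (Fin.snoc b 0) (Fin.snoc c 0)
          + γ • wedge2 (Fin.snoc c 0) (Fin.snoc c 0) := by
      rw [hu, snoc_comb]
      simp only [wedge2_eq_wedgeL, map_add, _root_.map_smul, LinearMap.add_apply,
        LinearMap.smul_apply]
    rw [expand, wedge2_self,
      wedge2_anticomm (Fin.snoc c 0) (Fin.snoc a 0),
      wedge2_anticomm (Fin.snoc c 0) (Fin.snoc b 0)]
    refine add_mem (add_mem ?_ ?_) ?_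
    · exact Submodule.smul_mem _ _ (neg_mem (memD_a c))
    · exact Submodule.smul_mem _ _ (neg_mem (memD_b c))
    · rw [smul_zero]
      exact zero_mem _
  have memD : ∀ u v' : Fin 3 → ℝ, wedge2 (Fin.snoc u 0) (Fin.snoc v' 0) ∈ RS := by
    intro u v'
    obtain ⟨α, β, γ, hv⟩ := exists_repr hab v'
    rw [← hc] at hv
    have expand : wedge2 (Fin.snoc u 0) (Fin.snoc v' 0)
        = α • wedge2 (Fin.snoc u 0) (Fin.snoc a 0)
          + β • wedge2 (Fin.snoc u 0) (Fin.snoc b 0)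
          + γ • wedge2 (Fin.snoc u 0) (Fin.snoc c 0) := by
      rw [hv, snoc_comb]
      simp only [wedge2_eq_wedgeL, map_add, _root_.map_smul]
    rw [expand]
    exact add_mem (add_mem (Submodule.smul_mem _ _ (memD_a u))
      (Submodule.smul_mem _ _ (memD_b u))) (Submodule.smul_mem _ _ (memD_c u))
  have memE3 : ∀ u : Fin 3 → ℝ, wedge2 (Fin.snoc u 0) (Fin.snoc (0 : Fin 3 → ℝ) 1) ∈ RS := by
    intro u
    have hsplit : wedge2 (Fin.snoc u 0) (Fin.snoc (0 : Fin 3 → ℝ) 1)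
        = wedge2 (Fin.snoc u 0) (Fin.snoc (p i) 1)
          - wedge2 (Fin.snoc u 0) (Fin.snoc (p i) 0) := by
      rw [show (Fin.snoc (0 : Fin 3 → ℝ) (1:ℝ) : Fin 4 → ℝ)
          = Fin.snoc (p i) 1 - Fin.snoc (p i) 0 from by
        funext jj
        induction jj using Fin.lastCases <;> simp [-Fin.reduceLast]]
      rw [wedge2_eq_wedgeL, wedge2_eq_wedgeL, wedge2_eq_wedgeL, map_sub]
    rw [hsplit]
    exact sub_mem (mem1 p u i) (memD u (p i))
  have he0 : e 0 = Fin.snoc ![1,0,0] (0:ℝ) := by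
    funext jj
    fin_cases jj <;>
      simp [e, Pi.single_apply, snoc_val0, snoc_val1, snoc_val2, snoc_val3]
  have he1 : e 1 = Fin.snoc ![0,1,0] (0:ℝ) := by
    funext jj
    fin_cases jj <;>
      simp [e, Pi.single_apply, snoc_val0, snoc_val1, snoc_val2, snoc_val3]
  have he2 : e 2 = Fin.snoc ![0,0,1] (0:ℝ) := by
    funext jj
    fin_cases jj <;>
      simp [e, Pi.single_apply, snoc_val0, snoc_val1, snoc_val2, snoc_val3]
  have he3 : e 3 = Fin.snoc (0 : Fin 3 → ℝ) (1:ℝ) := by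
    funext jj
    fin_cases jj <;>
      simp [e, Pi.single_apply, snoc_val0, snoc_val1, snoc_val2, snoc_val3]
  have hw01 : w 0 1 ∈ RS := by rw [w, he0, he1]; exact memD _ _
  have hw02 : w 0 2 ∈ RS := by rw [w, he0, he2]; exact memD _ _
  have hw12 : w 1 2 ∈ RS := by rw [w, he1, he2]; exact memD _ _
  have hw03 : w 0 3 ∈ RS := by rw [w, he0, he3]; exact memE3 _
  have hw13 : w 1 3 ∈ RS := by rw [w, he1, he3]; exact memE3 _
  have hw23 : w 2 3 ∈ RS := by rw [w, he2, he3]; exact memE3 _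
  refine lam2_le RS (fun x y => ?_)
  rw [wedge2_expand]
  exact add_mem (add_mem (add_mem (add_mem (add_mem
    (Submodule.smul_mem _ _ hw01) (Submodule.smul_mem _ _ hw02))
    (Submodule.smul_mem _ _ hw03)) (Submodule.smul_mem _ _ hw12))
    (Submodule.smul_mem _ _ hw13)) (Submodule.smul_mem _ _ hw23)


end PhiAux

/-- If `p` is not collinear then (a) `Φ` is surjective onto `Λ²(ℝ⁴)`, (b) the kernel of `Φ`
is exactly the space of equilibrium loads on `(V, p)`, and (c) the space of equilibrium
loads has dimension `3·|V| − 6`. -/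
theorem Phi_surjective_ker_eqLoads_finrank {V : Type*} [Fintype V]
    (p : V → Fin 3 → ℝ)
    (hp : ∃ i j k : V, AffineIndependent ℝ ![p i, p j, p k]) :
    Function.Surjective (Phi p) ∧
    (∀ f : V → Fin 3 → ℝ, Phi p f = 0 ↔ f ∈ eqLoads V p) ∧
    Module.finrank ℝ (eqLoads V p) = 3 * Fintype.card V - 6 := by
  classical
  have hker_iff : ∀ f : V → Fin 3 → ℝ, Phi p f = 0 ↔ f ∈ eqLoads V p := by
    intro f
    exact (PhiAux.ker_iff p f).trans Iff.rfl
  refine ⟨?_, hker_iff, ?_⟩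
  · intro z
    obtain ⟨f, hf⟩ := PhiAux.range_top p hp z
    exact ⟨f, hf⟩
  · have hker : LinearMap.ker (PhiAux.PhiL p) = eqLoads V p := by
      ext f
      rw [LinearMap.mem_ker]
      exact hker_iff f
    have hrange : LinearMap.range (PhiAux.PhiL p) = ⊤ := by
      rw [eq_top_iff]
      exact fun z _ => PhiAux.range_top p hp z
    have hrn := LinearMap.finrank_range_add_finrank_ker (PhiAux.PhiL p)
    rw [hrange, hker] at hrn
    have h6 : Module.finrank ℝ (⊤ : Submodule ℝ (⋀[ℝ]^2 (Fin 4 → ℝ))) = 6 := by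
      rw [finrank_top]
      exact PhiAux.finrank_lam2
    have hdom : Module.finrank ℝ (V → Fin 3 → ℝ) = 3 * Fintype.card V := by
      rw [Module.finrank_pi_fintype]
      simp [Module.finrank_pi, Finset.sum_const, mul_comm]
    rw [h6, hdom] at hrn
    omega
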